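/- The chromatic number of the Kneser graph KG_{n,2} (vertices are 2-element subsets of [n], edges between disjoint pairs) equals n − 2 for all n ≥ 3. -/

import Mathlib

/-- The Kneser graph `KG_{n,k}`: vertices are the `k`-element subsets of
`{1, …, n}`, two of them adjacent iff they are disjoint. -/
def kneserGraph (n k : ℕ) : SimpleGraph {s : Finset (Fin n) // s.card = k} where
  Adj s t := s ≠ t ∧ Disjoint s.1 t.1
  symm := by
    constructor
    rintro s t ⟨h1, h2⟩
    exact ⟨h1.symm, h2.symm⟩
  loopless := by
    constructor
    rintro s ⟨h, _⟩
    exact h rfl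

/-- An intersecting family of at least four 2-sets is a star. -/
lemma kneser_star {n : ℕ} (F : Finset (Finset (Fin n)))
    (hcard : ∀ s ∈ F, s.card = 2)
    (hint : ∀ s ∈ F, ∀ t ∈ F, ¬ Disjoint s t)
    (h4 : 4 ≤ F.card) : ∃ x, ∀ s ∈ F, x ∈ s := by
  classical
  have h1F : 1 < F.card := by omega
  obtain ⟨A, hA, B, hB, hAB⟩ := Finset.one_lt_card.mp h1F
  obtain ⟨x, hx⟩ := Finset.not_disjoint_iff.mp (hint A hA B hB)
  by_contra hcon
  push_neg at hcon
  obtain ⟨C, hC, hxC⟩ := hcon x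
  -- A ∩ B = {x}
  have hABx : ∀ y, y ∈ A → y ∈ B → y = x := by
    intro y hyA hyB
    by_contra hyx
    have hsub : ({x, y} : Finset (Fin n)) ⊆ A := by
      intro z hz; simp at hz; rcases hz with h | h <;> subst h
      · exact hx.1
      · exact hyA
    have hsub' : ({x, y} : Finset (Fin n)) ⊆ B := by
      intro z hz; simp at hz; rcases hz with h | h <;> subst h
      · exact hx.2
      · exact hyB
    have hc2 : ({x, y} : Finset (Fin n)).card = 2 := by
      rw [Finset.card_insert_of_notMem (by simp [Ne.symm hyx]), Finset.card_singleton]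
    have hA2 := hcard A hA
    have hB2 := hcard B hB
    have e1 := Finset.eq_of_subset_of_card_le hsub (by omega)
    have e2 := Finset.eq_of_subset_of_card_le hsub' (by omega)
    exact hAB (e1.symm.trans e2)
  -- every member of F is inside A ∪ B
  have hkey : ∀ D ∈ F, D ⊆ A ∪ B := by
    intro D hD
    have hDA := Finset.not_disjoint_iff.mp (hint D hD A hA)
    have hDB := Finset.not_disjoint_iff.mp (hint D hD B hB)
    have hDC := Finset.not_disjoint_iff.mp (hint D hD C hC)
    have hCA := Finset.not_disjoint_iff.mp (hint C hC A hA)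
    have hCB := Finset.not_disjoint_iff.mp (hint C hC B hB)
    -- C ⊆ A ∪ B
    obtain ⟨a, haC, haA⟩ := hCA
    obtain ⟨b, hbC, hbB⟩ := hCB
    have hax : a ≠ x := fun h => hxC (h ▸ haC)
    have hbx : b ≠ x := fun h => hxC (h ▸ hbC)
    have hab : a ≠ b := by
      intro h
      exact hax (hABx a haA (h ▸ hbB))
    have hCeq : C = {a, b} := by
      refine (Finset.eq_of_subset_of_card_le ?_ ?_).symm
      · intro z hz; simp at hz; rcases hz with h | h <;> subst h
        · exact haC
        · exact hbC
      · rw [hcard C hC, Finset.card_insert_of_notMem (by simp [hab]), Finset.card_singleton]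
    by_cases hxD : x ∈ D
    · obtain ⟨c, hcD, hcC⟩ := hDC
      have hcx : c ≠ x := fun h => hxC (h ▸ hcC)
      have hDeq : D = {x, c} := by
        refine (Finset.eq_of_subset_of_card_le ?_ ?_).symm
        · intro z hz; simp at hz; rcases hz with h | h <;> subst h
          · exact hxD
          · exact hcD
        · rw [hcard D hD, Finset.card_insert_of_notMem (by simp [Ne.symm hcx]),
            Finset.card_singleton]
      rw [hDeq]
      intro z hz; simp at hz
      rcases hz with h | h <;> subst h
      · exact Finset.mem_union_left _ hx.1
      · rw [hCeq] at hcC; simp at hcC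
        rcases hcC with h | h <;> subst h
        · exact Finset.mem_union_left _ haA
        · exact Finset.mem_union_right _ hbB
    · obtain ⟨a', ha'D, ha'A⟩ := hDA
      obtain ⟨b', hb'D, hb'B⟩ := hDB
      have ha'x : a' ≠ x := fun h => hxD (h ▸ ha'D)
      have hb'x : b' ≠ x := fun h => hxD (h ▸ hb'D)
      have ha'b' : a' ≠ b' := fun h => ha'x (hABx a' ha'A (h ▸ hb'B))
      have hDeq : D = {a', b'} := by
        refine (Finset.eq_of_subset_of_card_le ?_ ?_).symm
        · intro z hz; simp at hz; rcases hz with h | h <;> subst h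
          · exact ha'D
          · exact hb'D
        · rw [hcard D hD, Finset.card_insert_of_notMem (by simp [ha'b']),
            Finset.card_singleton]
      rw [hDeq]
      intro z hz; simp at hz
      rcases hz with h | h <;> subst h
      · exact Finset.mem_union_left _ ha'A
      · exact Finset.mem_union_right _ hb'B
  -- so F ⊆ powersetCard 2 (A ∪ B), which has ≤ 3 elements
  have hunion : (A ∪ B).card ≤ 3 := by
    have := Finset.card_union_le A B
    have hABi : 1 ≤ (A ∩ B).card := Finset.card_pos.mpr ⟨x, Finset.mem_inter.mpr hx⟩
    have := Finset.card_union_add_card_inter A B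
    have hA2 := hcard A hA
    have hB2 := hcard B hB
    omega
  have hFsub : F ⊆ (A ∪ B).powersetCard 2 := by
    intro D hD
    rw [Finset.mem_powersetCard]
    exact ⟨hkey D hD, hcard D hD⟩
  have := Finset.card_le_card hFsub
  rw [Finset.card_powersetCard] at this
  have h3 : (A ∪ B).card.choose 2 ≤ 3 := by
    interval_cases h : (A ∪ B).card <;> simp_all <;> omega
  omega

/-- The chromatic number of the Kneser graph `KG_{n,2}` is `n - 2` for
`n ≥ 3`. -/
theorem chromaticNumber_kneser_two (n : ℕ) (hn : 3 ≤ n) :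
    (kneserGraph n 2).chromaticNumber = (n - 2 : ℕ) := by
  classical
  -- upper bound: explicit coloring
  have hne : ∀ s : {s : Finset (Fin n) // s.card = 2}, s.1.Nonempty := by
    intro s; rw [← Finset.card_pos, s.2]; omega
  have hup : (kneserGraph n 2).Colorable (n - 2) := by
    refine ⟨SimpleGraph.Coloring.mk
      (fun s => if h : (s.1.min' (hne s)).val < n - 3 then ⟨(s.1.min' (hne s)).val, by omega⟩
        else ⟨n - 3, by omega⟩) ?_⟩
    rintro s t ⟨hst, hdis⟩
    intro heq
    by_cases h1 : (s.1.min' (hne s)).val < n - 3 <;>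
      by_cases h2 : (t.1.min' (hne t)).val < n - 3
    · rw [dif_pos h1, dif_pos h2] at heq
      have heq' := congrArg Fin.val heq
      simp only [] at heq'
      have hmeq : s.1.min' (hne s) = t.1.min' (hne t) := Fin.val_injective heq'
      have hm1 := Finset.min'_mem s.1 (hne s)
      have hm2 := Finset.min'_mem t.1 (hne t)
      rw [hmeq] at hm1
      exact Finset.disjoint_left.mp hdis hm1 hm2
    · rw [dif_pos h1, dif_neg h2] at heq
      have heq' := congrArg Fin.val heq
      simp only [] at heq'
      omega
    · rw [dif_neg h1, dif_pos h2] at heq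
      have heq' := congrArg Fin.val heq
      simp only [] at heq'
      omega
    · -- both 2-sets live in {n-3, n-2, n-1}, but they are disjoint: 4 ≤ 3
      push_neg at h1 h2
      have hs : ∀ y ∈ s.1, n - 3 ≤ y.val := fun y hy =>
        le_trans h1 (Finset.min'_le s.1 y hy)
      have ht : ∀ y ∈ t.1, n - 3 ≤ y.val := fun y hy =>
        le_trans h2 (Finset.min'_le t.1 y hy)
      have hcard4 : (s.1 ∪ t.1).card = 4 := by
        rw [Finset.card_union_of_disjoint hdis, s.2, t.2]
      have hle3 : (s.1 ∪ t.1).card ≤ 3 := by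
        have : ∀ a ∈ s.1 ∪ t.1, a.val - (n - 3) ∈ Finset.range 3 := by
          intro a ha
          rcases Finset.mem_union.mp ha with h | h
          · have := hs a h; have := a.isLt; simp only [Finset.mem_range]; omega
          · have := ht a h; have := a.isLt; simp only [Finset.mem_range]; omega
        calc (s.1 ∪ t.1).card ≤ (Finset.range 3).card := by
               apply Finset.card_le_card_of_injOn (fun a => a.val - (n - 3)) (fun a ha => this a ha)
               intro a ha b hb hab
               have hab : a.val - (n - 3) = b.val - (n - 3) := hab
               have h1 : n - 3 ≤ a.val := by
                 rcases Finset.mem_union.mp ha with h | h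
                 exacts [hs a h, ht a h]
               have h2 : n - 3 ≤ b.val := by
                 rcases Finset.mem_union.mp hb with h | h
                 exacts [hs b h, ht b h]
               exact Fin.val_injective (by omega)
          _ = 3 := Finset.card_range 3
      omega
  -- lower bound: no coloring with n - 3 colors
  have hlow : ¬ (kneserGraph n 2).Colorable (n - 3) := by
    rintro ⟨C⟩
    set V := {s : Finset (Fin n) // s.card = 2}
    -- color classes as families of 2-sets
    set G : Fin (n - 3) → Finset (Finset (Fin n)) :=
      fun i => (Finset.univ.filter (fun v : V => C v = i)).image Subtype.val with hG
    have hGcard : ∀ i, ∀ s ∈ G i, s.card = 2 := by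
      intro i s hs
      obtain ⟨v, _, rfl⟩ := Finset.mem_image.mp hs
      exact v.2
    have hGint : ∀ i, ∀ s ∈ G i, ∀ t ∈ G i, ¬ Disjoint s t := by
      intro i s hs t ht hdis
      obtain ⟨v, hv, rfl⟩ := Finset.mem_image.mp hs
      obtain ⟨w, hw, rfl⟩ := Finset.mem_image.mp ht
      simp only [Finset.mem_filter] at hv hw
      by_cases hvw : v = w
      · subst hvw
        rw [disjoint_self] at hdis
        have := v.2; rw [hdis] at this; simp at this
      · exact C.valid (G := kneserGraph n 2) ⟨hvw, hdis⟩ (hv.2.trans hw.2.symm)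
    have hmem : ∀ v : V, v.1 ∈ G (C v) := by
      intro v
      exact Finset.mem_image.mpr ⟨v, by simp, rfl⟩
    -- big classes and their centers
    set B : Finset (Fin (n - 3)) := Finset.univ.filter (fun i => 4 ≤ (G i).card) with hB
    have hx : ∀ i, ∃ x : Fin n, i ∈ B → ∀ s ∈ G i, x ∈ s := by
      intro i
      by_cases hi : i ∈ B
      · rw [hB, Finset.mem_filter] at hi
        obtain ⟨x, hx⟩ := kneser_star (G i) (hGcard i) (hGint i) hi.2
        exact ⟨x, fun _ => hx⟩
      · exact ⟨⟨0, by omega⟩, fun h => absurd h hi⟩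
    choose x hxspec using hx
    set X : Finset (Fin n) := B.image x with hX
    -- pairs avoiding X
    set P : Finset (Finset (Fin n)) := (Finset.univ \ X).powersetCard 2 with hP
    have hPcard : P.card = (n - X.card).choose 2 := by
      rw [hP, Finset.card_powersetCard, Finset.card_sdiff_of_subset (Finset.subset_univ X),
        Finset.card_univ, Fintype.card_fin]
    have hPsub : P ⊆ Bᶜ.biUnion G := by
      intro s hs
      rw [hP, Finset.mem_powersetCard] at hs
      obtain ⟨hsub, hs2⟩ := hs
      set v : V := ⟨s, hs2⟩ with hv
      refine Finset.mem_biUnion.mpr ⟨C v, ?_, hmem v⟩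
      rw [Finset.mem_compl]
      intro hCB
      have hxin : x (C v) ∈ s := hxspec (C v) hCB s (hmem v)
      have hxX : x (C v) ∈ X := Finset.mem_image.mpr ⟨C v, hCB, rfl⟩
      have := hsub hxin
      rw [Finset.mem_sdiff] at this
      exact this.2 hxX
    have hsmall : ∀ i ∈ Bᶜ, (G i).card ≤ 3 := by
      intro i hi
      rw [Finset.mem_compl, hB, Finset.mem_filter] at hi
      push_neg at hi
      have := hi (Finset.mem_univ i)
      omega
    have hcount : P.card ≤ 3 * Bᶜ.card := by
      calc P.card ≤ (Bᶜ.biUnion G).card := Finset.card_le_card hPsub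
        _ ≤ ∑ i ∈ Bᶜ, (G i).card := Finset.card_biUnion_le
        _ ≤ ∑ _i ∈ Bᶜ, 3 := Finset.sum_le_sum hsmall
        _ = 3 * Bᶜ.card := by rw [Finset.sum_const, smul_eq_mul, mul_comm]
    -- arithmetic contradiction
    have hXB : X.card ≤ B.card := Finset.card_image_le
    have hBle : B.card ≤ n - 3 := by
      have := Finset.card_le_univ B
      simpa using this
    set t := n - 3 - B.card with ht
    have hBc : Bᶜ.card = t := by
      rw [Finset.card_compl, Fintype.card_fin]
    have hmono : (t + 3).choose 2 ≤ (n - X.card).choose 2 :=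
      Nat.choose_le_choose 2 (by omega)
    have hfin : (t + 3).choose 2 ≤ 3 * t := by
      calc (t + 3).choose 2 ≤ (n - X.card).choose 2 := hmono
        _ = P.card := hPcard.symm
        _ ≤ 3 * Bᶜ.card := hcount
        _ = 3 * t := by rw [hBc]
    have hev : Even ((t + 3) * (t + 2)) := by
      have h : (t + 3) * (t + 2) = (t + 2) * (t + 2 + 1) := by ring
      rw [h]; exact Nat.even_mul_succ_self (t + 2)
    have heq : 2 * ((t + 3).choose 2) = (t + 3) * (t + 2) := by
      rw [Nat.choose_two_right]
      have h3 : t + 3 - 1 = t + 2 := by omega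
      rw [h3]
      exact Nat.two_mul_div_two_of_even hev
    have hp : (t + 3) * (t + 2) ≤ 6 * t := by omega
    nlinarith [hp, sq_nonneg t]
  -- combine
  refine le_antisymm (SimpleGraph.chromaticNumber_le_iff_colorable.mpr hup) ?_
  by_contra h
  push_neg at h
  have h' : (kneserGraph n 2).chromaticNumber ≤ ((n - 3 : ℕ) : ℕ∞) := by
    have hcast : ((n - 2 : ℕ) : ℕ∞) = ((n - 3 : ℕ) : ℕ∞) + 1 := by
      have : (n - 2 : ℕ) = (n - 3) + 1 := by omega
      rw [this]; push_cast; ring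
    rw [hcast] at h
    exact (ENat.lt_add_one_iff (by simp)).mp h
  exact hlow (SimpleGraph.chromaticNumber_le_iff_colorable.mp h')
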